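/- In the stated setting (Φ₁(r) = (1∧r)^{β₁}, Φ₂(r) = (1∧r)^{β₂}φ(r) with β₂ = α + β₁, and liminf_{s→0⁺} ℓ(s) > 0), define for t > 0 and x, y ∈ D with x ≠ y: 𝓘(t,x,y) := A_{Φ₀,Φ₀,1}(t,x,y) · ∫ from (δ_D(x)∨δ_D(y)∨t^{1/α})∧(|x−y|/4) to |x−y| of [ℓ((δ_D(x)∨t^{1/α})/u) · ℓ((δ_D(y)∨t^{1/α})/u) · φ(u/|x−y|)] / [ℓ((δ_D(x)∨t^{1/α})/|x−y|) · ℓ((δ_D(y)∨t^{1/α})/|x−y|)] · du/u. Then: (a) for every pair of distinct x, y ∈ D, lim_{t→0⁺} [t|x−y|^{−α} 𝓘(t,x,y)] / A_{Φ₁,Φ₂,ℓ}(t,x,y) = 0; (b) for every pair of distinct points Q, Q′ ∈ ∂D, limsup_{t→0⁺} L(t) = +∞, where L(t) denotes the limit inferior of [t|x−y|^{−α} 𝓘(t,x,y)] / A_{Φ₁,Φ₂,ℓ}(t,x,y) as x → Q and y → Q′ with x, y ∈ D. -/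

import Mathlib

open Set Metric MeasureTheory Real Filter Topology

noncomputable section

/-- `f` satisfies the lower scaling condition at zero with index `b`. -/
def HasLowerScaling (f : ℝ → ℝ) (b : ℝ) : Prop :=
  ∃ C : ℝ, 1 ≤ C ∧ ∀ s r : ℝ, 0 < s → s ≤ r → r ≤ 1 → C⁻¹ * (r / s) ^ b ≤ f r / f s

/-- `f` satisfies the upper scaling condition at zero with index `b`. -/
def HasUpperScaling (f : ℝ → ℝ) (b : ℝ) : Prop :=
  ∃ C : ℝ, 1 ≤ C ∧ ∀ s r : ℝ, 0 < s → s ≤ r → r ≤ 1 → f r / f s ≤ C * (r / s) ^ b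

/-- The lower Matuszewska index of `f` at zero equals `β`,
i.e. `β` is the supremum of the indices for which the lower scaling condition holds. -/
def LowerIndexIs (f : ℝ → ℝ) (β : ℝ) : Prop :=
  (∀ b : ℝ, b < β → HasLowerScaling f b) ∧ (∀ b : ℝ, β < b → ¬ HasLowerScaling f b)

/-- The upper Matuszewska index of `f` at zero equals `β`,
i.e. `β` is the infimum of the indices for which the upper scaling condition holds. -/
def UpperIndexIs (f : ℝ → ℝ) (β : ℝ) : Prop :=
  (∀ b : ℝ, β < b → HasUpperScaling f b) ∧ (∀ b : ℝ, b < β → ¬ HasUpperScaling f b)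

/-- `f` is almost increasing on `(0,1]`. -/
def AlmostIncreasingOn01 (f : ℝ → ℝ) : Prop :=
  ∃ C : ℝ, 1 ≤ C ∧ ∀ s r : ℝ, 0 < s → s ≤ r → r ≤ 1 → f s ≤ C * f r

/-- `f` is almost decreasing on `(0,1]`. -/
def AlmostDecreasingOn01 (f : ℝ → ℝ) : Prop :=
  ∃ C : ℝ, 1 ≤ C ∧ ∀ s r : ℝ, 0 < s → s ≤ r → r ≤ 1 → f r ≤ C * f s

/-- A positive Borel function on `(0,∞)`, equal to `1` on `[1,∞)`. -/
def StdFun (f : ℝ → ℝ) : Prop :=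
  Measurable f ∧ (∀ r : ℝ, 0 < r → 0 < f r) ∧ (∀ r : ℝ, 1 ≤ r → f r = 1)

/-- The scaling condition for the slowly varying factor `ℓ`, with parameters `β₁, β₂`. -/
def EllScaling (l : ℝ → ℝ) (β₁ β₂ : ℝ) : Prop :=
  ∀ ε : ℝ, 0 < ε → ∃ C : ℝ, 1 ≤ C ∧ ∀ s r : ℝ, 0 < s → s ≤ r → r ≤ 1 →
    C⁻¹ * (r / s) ^ (-(min ε β₁)) ≤ l r / l s ∧ l r / l s ≤ C * (r / s) ^ (min ε β₂)

/-- `l` has both Matuszewska indices at zero equal to `0`. -/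
def SlowlyVaryingScaling (l : ℝ → ℝ) : Prop :=
  ∀ ε : ℝ, 0 < ε → ∃ C : ℝ, 1 ≤ C ∧ ∀ s r : ℝ, 0 < s → s ≤ r → r ≤ 1 →
    C⁻¹ * (r / s) ^ (-ε) ≤ l r / l s ∧ l r / l s ≤ C * (r / s) ^ ε

/-- The distance to the boundary of `D`. -/
def dd {d : ℕ} (D : Set (EuclideanSpace ℝ (Fin d))) (x : EuclideanSpace ℝ (Fin d)) : ℝ :=
  Metric.infDist x (frontier D)

/-- The function `A_{f,g,h}(t,x,y)`. -/
def Afun {d : ℕ} (α : ℝ) (D : Set (EuclideanSpace ℝ (Fin d))) (f g h : ℝ → ℝ)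
    (t : ℝ) (x y : EuclideanSpace ℝ (Fin d)) : ℝ :=
  f (max (min (dd D x) (dd D y)) (t ^ (1 / α)) / dist x y) *
  g (max (max (dd D x) (dd D y)) (t ^ (1 / α)) / dist x y) *
  h (max (min (dd D x) (dd D y)) (t ^ (1 / α)) /
      min (max (max (dd D x) (dd D y)) (t ^ (1 / α))) (dist x y))

/-- The inward unit vector `𝐧ₓ = (x - Qₓ)/δ_D(x)`. -/
def nv {d : ℕ} (D : Set (EuclideanSpace ℝ (Fin d)))
    (Q : EuclideanSpace ℝ (Fin d) → EuclideanSpace ℝ (Fin d))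
    (x : EuclideanSpace ℝ (Fin d)) : EuclideanSpace ℝ (Fin d) :=
  (dd D x)⁻¹ • (x - Q x)

/-- `∫_a^b A_{f,g,h}(t,x,x+u𝐧ₓ) A_{f,g,h}(t,x+u𝐧ₓ,y) u^{-α-1} du`. -/
def Iint {d : ℕ} (α : ℝ) (D : Set (EuclideanSpace ℝ (Fin d)))
    (Q : EuclideanSpace ℝ (Fin d) → EuclideanSpace ℝ (Fin d))
    (f g h : ℝ → ℝ) (a b t : ℝ) (x y : EuclideanSpace ℝ (Fin d)) : ℝ :=
  ∫ u in Set.Ioo a b,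
    Afun α D f g h t x (x + u • nv D Q x) * Afun α D f g h t (x + u • nv D Q x) y *
      u ^ (-α - 1)

/-- `∫_a^b f₀(k₂/u) f₂(u/rr) l(k₁/u) u^{-α-1} du`. -/
def Jint (α : ℝ) (f₀ f₂ l : ℝ → ℝ) (a b rr k₁ k₂ : ℝ) : ℝ :=
  ∫ u in Set.Ioo a b, f₀ (k₂ / u) * f₂ (u / rr) * l (k₁ / u) * u ^ (-α - 1)

/-- The quantity `𝓘(t,x,y)` of Lemma 3.5(ii). -/
def sI {d : ℕ} (α : ℝ) (D : Set (EuclideanSpace ℝ (Fin d))) (Φ₀ φf lf : ℝ → ℝ)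
    (t : ℝ) (x y : EuclideanSpace ℝ (Fin d)) : ℝ :=
  Afun α D Φ₀ Φ₀ (fun _ => (1 : ℝ)) t x y *
    ∫ u in Set.Ioo (min (max (max (dd D x) (dd D y)) (t ^ (1 / α))) (dist x y / 4))
        (dist x y),
      lf (max (dd D x) (t ^ (1 / α)) / u) * lf (max (dd D y) (t ^ (1 / α)) / u) *
          φf (u / dist x y) /
        (lf (max (dd D x) (t ^ (1 / α)) / dist x y) *
          lf (max (dd D y) (t ^ (1 / α)) / dist x y)) / u

namespace Stm9

lemma inv_bound {C p q : ℝ} (hC : 0 < C) (hp : 0 < p) (hq : 0 < q)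
    (h : C⁻¹ * p ≤ 1 / q) : q ≤ C * p⁻¹ := by
  have h2 : C⁻¹ * p * q ≤ 1 := (le_div_iff₀ hq).mp h
  have h3 := mul_le_mul_of_nonneg_left h2 (mul_pos hC (inv_pos.mpr hp)).le
  calc q = C * p⁻¹ * (C⁻¹ * p * q) := by field_simp
    _ ≤ C * p⁻¹ * 1 := h3
    _ = C * p⁻¹ := mul_one _

lemma inv_bound' {C p q : ℝ} (hC : 0 < C) (hp : 0 < p) (hq : 0 < q)
    (h : 1 / q ≤ C * p) : C⁻¹ * p⁻¹ ≤ q := by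
  have h2 : 1 ≤ C * p * q := by
    have h' := (div_le_iff₀ hq).mp h
    linarith
  have h3 := mul_le_mul_of_nonneg_left h2 (mul_pos (inv_pos.mpr hC) (inv_pos.mpr hp)).le
  calc C⁻¹ * p⁻¹ = C⁻¹ * p⁻¹ * 1 := (mul_one _).symm
    _ ≤ C⁻¹ * p⁻¹ * (C * p * q) := h3
    _ = q := by field_simp

/-- `F(a) = ∫_a^1 φ(v) dv/v`. -/
def Fn (φf : ℝ → ℝ) (a : ℝ) : ℝ := ∫ v in Set.Ioo a 1, φf v * v⁻¹

lemma gInt (φf : ℝ → ℝ) (Cφ : ℝ) (hCφ0 : 0 < Cφ) (hm : Measurable φf)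
    (hpos : ∀ v : ℝ, 0 < v → 0 < φf v)
    (hup : ∀ v : ℝ, 0 < v → v ≤ 1 → φf v ≤ Cφ * v⁻¹) {a b : ℝ} (ha : 0 < a) (hb : b ≤ 1) :
    IntegrableOn (fun v => φf v * v⁻¹) (Set.Ioc a b) := by
  apply Measure.integrableOn_of_bounded (M := Cφ * a⁻¹ * a⁻¹) measure_Ioc_lt_top.ne
    (hm.mul measurable_inv).aestronglyMeasurable
  rw [ae_restrict_iff' measurableSet_Ioc]
  apply ae_of_all
  intro v hv
  have hv0 : 0 < v := ha.trans hv.1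
  have h1 : φf v ≤ Cφ * v⁻¹ := hup v hv0 (hv.2.trans hb)
  have h2 : v⁻¹ ≤ a⁻¹ := inv_anti₀ ha hv.1.le
  have hnn : 0 ≤ φf v * v⁻¹ := mul_nonneg (hpos v hv0).le (inv_nonneg.mpr hv0.le)
  rw [Real.norm_eq_abs, Pi.mul_apply, abs_of_nonneg hnn]
  calc φf v * v⁻¹ ≤ (Cφ * v⁻¹) * v⁻¹ :=
        mul_le_mul_of_nonneg_right h1 (inv_nonneg.mpr hv0.le)
    _ ≤ (Cφ * a⁻¹) * a⁻¹ := by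
        apply mul_le_mul (mul_le_mul_of_nonneg_left h2 hCφ0.le) h2
          (inv_nonneg.mpr hv0.le) (by positivity)

lemma gIntIoo (φf : ℝ → ℝ) (Cφ : ℝ) (hCφ0 : 0 < Cφ) (hm : Measurable φf)
    (hpos : ∀ v : ℝ, 0 < v → 0 < φf v)
    (hup : ∀ v : ℝ, 0 < v → v ≤ 1 → φf v ≤ Cφ * v⁻¹) {a b : ℝ} (ha : 0 < a) (hb : b ≤ 1) :
    IntegrableOn (fun v => φf v * v⁻¹) (Set.Ioo a b) :=
  (gInt φf Cφ hCφ0 hm hpos hup ha hb).mono_set Set.Ioo_subset_Ioc_self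

lemma Fn_split (φf : ℝ → ℝ) (Cφ : ℝ) (hCφ0 : 0 < Cφ) (hm : Measurable φf)
    (hpos : ∀ v : ℝ, 0 < v → 0 < φf v)
    (hup : ∀ v : ℝ, 0 < v → v ≤ 1 → φf v ≤ Cφ * v⁻¹) {a b : ℝ}
    (ha : 0 < a) (hab : a ≤ b) (hb : b ≤ 1) :
    Fn φf a = (∫ v in Set.Ioo a b, φf v * v⁻¹) + Fn φf b := by
  unfold Fn
  simp only [← integral_Ioc_eq_integral_Ioo]
  rw [← Ioc_union_Ioc_eq_Ioc hab hb,
    setIntegral_union (Ioc_disjoint_Ioc_of_le le_rfl) measurableSet_Ioc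
      (gInt φf Cφ hCφ0 hm hpos hup ha hb)
      (gInt φf Cφ hCφ0 hm hpos hup (ha.trans_le hab) le_rfl)]

lemma Fn_mono (φf : ℝ → ℝ) (Cφ : ℝ) (hCφ0 : 0 < Cφ) (hm : Measurable φf)
    (hpos : ∀ v : ℝ, 0 < v → 0 < φf v)
    (hup : ∀ v : ℝ, 0 < v → v ≤ 1 → φf v ≤ Cφ * v⁻¹) {a b : ℝ}
    (ha : 0 < a) (hab : a ≤ b) (hb : b ≤ 1) :
    Fn φf b ≤ Fn φf a := by
  rw [Fn_split φf Cφ hCφ0 hm hpos hup ha hab hb]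
  have h : (0:ℝ) ≤ ∫ v in Set.Ioo a b, φf v * v⁻¹ := setIntegral_nonneg measurableSet_Ioo
    (fun v hv => mul_nonneg (hpos v (ha.trans hv.1)).le (inv_nonneg.mpr (ha.trans hv.1).le))
  linarith

lemma cov (φf : ℝ → ℝ) {s r : ℝ} (hs : 0 < s) (hsr : s < r) :
    ∫ u in Set.Ioo s r, φf (u / r) * u⁻¹ = Fn φf (s / r) := by
  have hr : 0 < r := hs.trans hsr
  have hrne : r ≠ 0 := hr.ne'
  have key : ∀ u : ℝ, φf (u / r) * u⁻¹ = r⁻¹ • ((fun v => φf v * v⁻¹) (u / r)) := by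
    intro u
    by_cases hu : u = 0
    · simp [hu]
    · simp only [smul_eq_mul]
      field_simp
  calc ∫ u in Set.Ioo s r, φf (u / r) * u⁻¹
      = ∫ u in s..r, φf (u / r) * u⁻¹ := by
        rw [intervalIntegral.integral_of_le hsr.le, integral_Ioc_eq_integral_Ioo]
    _ = ∫ u in s..r, r⁻¹ • ((fun v => φf v * v⁻¹) (u / r)) := by simp only [key]
    _ = r⁻¹ • ∫ u in s..r, (fun v => φf v * v⁻¹) (u / r) := intervalIntegral.integral_smul _ _
    _ = r⁻¹ • (r • ∫ v in s / r..r / r, φf v * v⁻¹) := by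
        rw [intervalIntegral.integral_comp_div (fun v => φf v * v⁻¹) hrne]
    _ = ∫ v in s / r..1, φf v * v⁻¹ := by
        rw [div_self hrne, smul_smul, inv_mul_cancel₀ hrne, one_smul]
    _ = Fn φf (s / r) := by
        rw [intervalIntegral.integral_of_le (le_of_lt ((div_lt_one hr).mpr hsr)),
          integral_Ioc_eq_integral_Ioo]
        rfl

lemma growth (φf : ℝ → ℝ) (Cφ : ℝ) (hCφ : 1 ≤ Cφ) (hm : Measurable φf)
    (hpos : ∀ v : ℝ, 0 < v → 0 < φf v)
    (hup : ∀ v : ℝ, 0 < v → v ≤ 1 → φf v ≤ Cφ * v⁻¹)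
    (hlow : ∀ v : ℝ, 0 < v → v ≤ 1 → Cφ⁻¹ * v ≤ φf v)
    (hfac : ∀ w w' : ℝ, 0 < w → 0 < w' → w ≤ 1 → w' ≤ 1 → w ≤ 2*w' → w' ≤ 2*w →
      φf w ≤ 2*Cφ*φf w')
    (hεbd : ∀ ε : ℝ, 0 < ε → ∃ C : ℝ, 1 ≤ C ∧ ∀ v : ℝ, 0 < v → v ≤ 1 → φf v ≤ C * v ^ (-ε))
    (K : ℝ) (hK : 0 < K) (a₁ : ℝ) (ha₁ : 0 < a₁) (ha₁' : a₁ ≤ 1/2) :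
    ∃ a : ℝ, 0 < a ∧ a ≤ a₁ ∧ K * φf a < Fn φf a := by
  have hCφ0 : 0 < Cφ := lt_of_lt_of_le one_pos hCφ
  by_contra hcon
  push_neg at hcon
  set κ := (4*Cφ*K)⁻¹ with hκdef
  have hκ : 0 < κ := by positivity
  have step : ∀ a : ℝ, 0 < a → a ≤ a₁ → (1+κ) * Fn φf a ≤ Fn φf (a/2) := by
    intro a ha haa
    have ha1 : a ≤ 1 := haa.trans (by linarith)
    have hsplit := Fn_split φf Cφ hCφ0 hm hpos hup (a := a/2) (b := a)
      (by positivity) (by linarith) ha1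
    have hc : ∀ v ∈ Set.Ioo (a/2) a, (φf a / (2*Cφ)) * a⁻¹ ≤ φf v * v⁻¹ := by
      intro v hv
      obtain ⟨hv1, hv2⟩ := hv
      have hv0 : 0 < v := lt_trans (by positivity) hv1
      have h1 : φf a ≤ 2*Cφ*φf v := hfac a v ha hv0 ha1 (by linarith) (by linarith) (by linarith)
      have h2 : φf a / (2*Cφ) ≤ φf v := by rw [div_le_iff₀ (by positivity)]; linarith
      have h3 : a⁻¹ ≤ v⁻¹ := inv_anti₀ hv0 hv2.le
      exact mul_le_mul h2 h3 (by positivity) (hpos v hv0).le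
    have hint : IntegrableOn (fun v => φf v * v⁻¹) (Set.Ioo (a/2) a) :=
      gIntIoo φf Cφ hCφ0 hm hpos hup (by positivity) ha1
    have hlb := setIntegral_ge_of_const_le measurableSet_Ioo measure_Ioo_lt_top.ne hc hint
    rw [Real.volume_real_Ioo, max_eq_left (by linarith), smul_eq_mul] at hlb
    have hφa : 0 < φf a := hpos a ha
    have hineq : κ * Fn φf a ≤ φf a / (2*Cφ) * a⁻¹ * (a - a/2) := by
      have he : φf a / (2*Cφ) * a⁻¹ * (a - a/2) = φf a / (4*Cφ) := by
        field_simp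
        ring
      rw [he]
      have h5 : Fn φf a ≤ K * φf a := hcon a ha haa
      calc κ * Fn φf a ≤ κ * (K * φf a) := mul_le_mul_of_nonneg_left h5 hκ.le
        _ = φf a / (4*Cφ) := by rw [hκdef]; field_simp
    linarith
  have hFa₁pos : 0 < Fn φf a₁ := by
    have hc : ∀ v ∈ Set.Ioo a₁ 1, Cφ⁻¹ ≤ φf v * v⁻¹ := by
      intro v hv
      have hv0 : 0 < v := ha₁.trans hv.1
      have h1 := hlow v hv0 hv.2.le
      calc Cφ⁻¹ = (Cφ⁻¹ * v) * v⁻¹ := by field_simp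
        _ ≤ φf v * v⁻¹ := mul_le_mul_of_nonneg_right h1 (inv_nonneg.mpr hv0.le)
    have hint : IntegrableOn (fun v => φf v * v⁻¹) (Set.Ioo a₁ 1) :=
      gIntIoo φf Cφ hCφ0 hm hpos hup ha₁ le_rfl
    have hlb := setIntegral_ge_of_const_le measurableSet_Ioo measure_Ioo_lt_top.ne hc hint
    rw [Real.volume_real_Ioo, max_eq_left (by linarith), smul_eq_mul] at hlb
    have : 0 < Cφ⁻¹ * (1 - a₁) := by
      have : (0:ℝ) < 1 - a₁ := by linarith
      positivity
    calc (0:ℝ) < Cφ⁻¹ * (1 - a₁) := this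
      _ ≤ Fn φf a₁ := by rw [mul_comm]; exact hlb
  have hiter : ∀ n : ℕ, (1+κ)^n * Fn φf a₁ ≤ Fn φf (a₁ * (1/2)^n) := by
    intro n
    induction n with
    | zero => simp
    | succ n ih =>
      have hpos' : 0 < a₁ * (1/2:ℝ)^n := by positivity
      have hle : a₁ * (1/2:ℝ)^n ≤ a₁ := by
        nth_rewrite 2 [← mul_one a₁]
        exact mul_le_mul_of_nonneg_left (pow_le_one₀ (by norm_num) (by norm_num)) ha₁.le
      have h2 := step _ hpos' hle
      have heq2 : a₁ * (1/2:ℝ)^(n+1) = (a₁ * (1/2)^n)/2 := by ring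
      rw [heq2]
      calc (1+κ)^(n+1) * Fn φf a₁ = (1+κ) * ((1+κ)^n * Fn φf a₁) := by ring
        _ ≤ (1+κ) * Fn φf (a₁*(1/2)^n) := mul_le_mul_of_nonneg_left ih (by positivity)
        _ ≤ _ := h2
  set ε := Real.log (1+κ) / (2 * Real.log 2) with hεdef
  have hlog2 : 0 < Real.log 2 := Real.log_pos one_lt_two
  have hε : 0 < ε := div_pos (Real.log_pos (by linarith)) (by positivity)
  obtain ⟨Cε, hCε1, hCε⟩ := hεbd ε hε
  set q2 := ((1/2:ℝ)) ^ (-ε) with hq2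
  have hq2pos : 0 < q2 := Real.rpow_pos_of_pos (by norm_num) _
  have hub : ∀ n : ℕ, (1+κ)^n * Fn φf a₁ ≤ K * Cε * a₁^(-ε) * q2^n := by
    intro n
    have hpos' : 0 < a₁ * (1/2:ℝ)^n := by positivity
    have hle : a₁ * (1/2:ℝ)^n ≤ a₁ := by
      nth_rewrite 2 [← mul_one a₁]
      exact mul_le_mul_of_nonneg_left (pow_le_one₀ (by norm_num) (by norm_num)) ha₁.le
    have h1 : Fn φf (a₁*(1/2)^n) ≤ K * φf (a₁*(1/2)^n) := hcon _ hpos' hle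
    have h2 : φf (a₁*(1/2)^n) ≤ Cε * (a₁*(1/2)^n)^(-ε) := hCε _ hpos' (hle.trans (by linarith))
    have h3 : ((a₁*(1/2)^n : ℝ))^(-ε) = a₁^(-ε) * q2^n := by
      rw [Real.mul_rpow ha₁.le (by positivity)]
      congr 1
      rw [← Real.rpow_natCast (1/2 : ℝ) n, ← Real.rpow_mul (by norm_num), hq2,
        ← Real.rpow_natCast ((1/2:ℝ) ^ (-ε)) n, ← Real.rpow_mul (by norm_num)]
      ring_nf
    calc (1+κ)^n * Fn φf a₁ ≤ Fn φf (a₁*(1/2)^n) := hiter n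
      _ ≤ K * (Cε * ((a₁*(1/2)^n)^(-ε))) :=
          h1.trans (mul_le_mul_of_nonneg_left h2 hK.le)
      _ = K * Cε * a₁^(-ε) * q2^n := by rw [h3]; ring
  have hq2lt : q2 < 1 + κ := by
    have he : q2 = Real.exp (Real.log (1+κ) / 2) := by
      rw [hq2, one_div, Real.inv_rpow (by norm_num : (0:ℝ) ≤ 2), ← Real.rpow_neg (by norm_num : (0:ℝ) ≤ 2), neg_neg,
        Real.rpow_def_of_pos (by norm_num : (0:ℝ) < 2), hεdef]
      congr 1
      field_simp
    rw [he]
    have h4 : Real.exp (Real.log (1+κ)) = 1+κ := Real.exp_log (by linarith)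
    calc Real.exp (Real.log (1+κ)/2) < Real.exp (Real.log (1+κ)) := by
          apply Real.exp_lt_exp.mpr
          have := Real.log_pos (show (1:ℝ) < 1+κ by linarith)
          linarith
      _ = 1+κ := h4
  have hqr : 1 < (1+κ)/q2 := (one_lt_div hq2pos).mpr hq2lt
  have hbdd : ∀ n : ℕ, ((1+κ)/q2)^n ≤ K * Cε * a₁^(-ε) / Fn φf a₁ := by
    intro n
    rw [div_pow, div_le_div_iff₀ (by positivity) hFa₁pos]
    calc (1+κ)^n * Fn φf a₁ ≤ K * Cε * a₁^(-ε) * q2^n := hub n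
      _ = _ := by ring
  obtain ⟨n, hn⟩ := ((tendsto_pow_atTop_atTop_of_one_lt hqr).eventually
    (eventually_gt_atTop (K * Cε * a₁^(-ε) / Fn φf a₁))).exists
  exact absurd (hbdd n) (not_le.mpr hn)


lemma Jbounds (φf l : ℝ → ℝ) (Cφ Cl c₀ m₁ : ℝ)
    (hφmeas : Measurable φf) (hφpos : ∀ v : ℝ, 0 < v → 0 < φf v)
    (hlmeas : Measurable l) (hlpos : ∀ v : ℝ, 0 < v → 0 < l v)
    (hCφ1 : 1 ≤ Cφ)
    (hφup : ∀ v : ℝ, 0 < v → v ≤ 1 → φf v ≤ Cφ * v⁻¹)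
    (hφlow : ∀ v : ℝ, 0 < v → v ≤ 1 → Cφ⁻¹ * v ≤ φf v)
    (hφfac : ∀ w w' : ℝ, 0 < w → 0 < w' → w ≤ 1 → w' ≤ 1 → w ≤ 2*w' → w' ≤ 2*w →
      φf w ≤ 2*Cφ*φf w')
    (hCl0 : 0 < Cl) (hm₁0 : 0 ≤ m₁)
    (hlup : ∀ w : ℝ, 0 < w → w ≤ 1 → l w ≤ Cl * (w ^ m₁)⁻¹)
    (hc₀pos : 0 < c₀) (hc₀ : ∀ w : ℝ, 0 < w → w ≤ 1 → c₀ ≤ l w)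
    (M M'' K R a₀ s r : ℝ)
    (hM'' : M'' = max M 0 / (c₀*c₀)) (hK : K = 2*Cφ*(M''+1))
    (hR0 : 0 < R) (ha₀pos : 0 < a₀) (ha₀8 : a₀ ≤ 1/8)
    (hgrow : K * φf a₀ < Fn φf a₀)
    (hs : s = a₀ * R) (hr1 : R/2 < r) (hr2 : r < 2*R) :
    M ≤ (∫ u in Set.Ioo s r, l (s/u) * l (s/u) * φf (u/r) * u⁻¹) / φf (s/r) ∧
    (∫ u in Set.Ioo s r, l (s/u) * l (s/u) * φf (u/r) * u⁻¹) / φf (s/r)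
      ≤ ((Cl * (2*R/s) ^ m₁) * (Cl * (2*R/s) ^ m₁) * (Cφ * (2*R/s)) * s⁻¹) * (2*R)
          / (Cφ⁻¹ * (a₀/2)) := by
  have hCφ0 : 0 < Cφ := lt_of_lt_of_le one_pos hCφ1
  have hs0 : 0 < s := hs ▸ mul_pos ha₀pos hR0
  have hr0 : 0 < r := lt_trans (by linarith) hr1
  have hsr : s < r := by
    have h1 : s ≤ R/8 := by
      rw [hs]
      calc a₀ * R ≤ (1/8) * R := mul_le_mul_of_nonneg_right ha₀8 hR0.le
        _ = R/8 := by ring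
    linarith
  have ha'0 : 0 < s/r := div_pos hs0 hr0
  have ha'1 : s/r < 1 := (div_lt_one hr0).mpr hsr
  have ha'le1 : s/r ≤ 1 := ha'1.le
  have ha'ub : s/r < 2*a₀ := by
    rw [hs]
    have h1 := div_lt_div_of_pos_left (mul_pos ha₀pos hR0) (by linarith : (0:ℝ) < R/2) hr1
    have h2 : (a₀*R)/(R/2) = 2*a₀ := by field_simp
    rw [h2] at h1
    exact h1
  have ha'lb : a₀/2 < s/r := by
    rw [hs]
    have h1 := div_lt_div_of_pos_left (mul_pos ha₀pos hR0) hr0 hr2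
    have h2 : (a₀*R)/(2*R) = a₀/2 := by field_simp
    rw [h2] at h1
    exact h1
  have h2a₀ : 2*a₀ ≤ 1 := by linarith
  have hM''0 : 0 ≤ M'' := hM'' ▸ div_nonneg (le_max_right M 0) (by positivity)
  have hφa'pos : 0 < φf (s/r) := hφpos _ ha'0
  set Dc := (Cl * (2*R/s) ^ m₁) * (Cl * (2*R/s) ^ m₁) * (Cφ * (2*R/s)) * s⁻¹ with hDcdef
  have hDc0 : 0 ≤ Dc := by positivity
  -- measurability
  have hmeas1 : Measurable fun u : ℝ => l (s/u) :=
    hlmeas.comp (measurable_const.div measurable_id)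
  have hmeas2 : Measurable fun u : ℝ => φf (u/r) := hφmeas.comp (measurable_id.div_const r)
  have hmeasfull : Measurable fun u : ℝ => l (s/u) * l (s/u) * φf (u/r) * u⁻¹ :=
    ((hmeas1.mul hmeas1).mul hmeas2).mul measurable_inv
  have hmeaslow : Measurable fun u : ℝ => φf (u/r) * u⁻¹ := hmeas2.mul measurable_inv
  -- pointwise bounds
  have hφbL : ∀ u ∈ Set.Ioo s r, φf (u/r) ≤ Cφ * (2*R/s) := by
    intro u hu
    have hu0 : 0 < u := hs0.trans hu.1
    have hur0 : 0 < u/r := div_pos hu0 hr0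
    have h1 := hφup _ hur0 (le_of_lt ((div_lt_one hr0).mpr hu.2))
    have h2 : ((u:ℝ)/r)⁻¹ = r/u := inv_div _ _
    have h3 : (r:ℝ)/u ≤ 2*R/s := div_le_div₀ (by positivity) (by linarith) hs0 hu.1.le
    calc φf (u/r) ≤ Cφ * (u/r)⁻¹ := h1
      _ = Cφ * (r/u) := by rw [h2]
      _ ≤ Cφ * (2*R/s) := mul_le_mul_of_nonneg_left h3 hCφ0.le
  have hlbL : ∀ u ∈ Set.Ioo s r, l (s/u) ≤ Cl * (2*R/s) ^ m₁ := by
    intro u hu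
    have hu0 : 0 < u := hs0.trans hu.1
    have hsu0 : 0 < s/u := div_pos hs0 hu0
    have hsu1 : s/u ≤ 1 := le_of_lt ((div_lt_one hu0).mpr hu.1)
    have h1 := hlup _ hsu0 hsu1
    have h2 : ((s/u : ℝ) ^ m₁)⁻¹ = (u/s) ^ m₁ := by
      rw [← Real.inv_rpow hsu0.le, inv_div]
    have h4 : u ≤ 2*R := by linarith [hu.2]
    have h3 : (u/s : ℝ) ^ m₁ ≤ (2*R/s) ^ m₁ :=
      Real.rpow_le_rpow (by positivity) ((div_le_div_iff_of_pos_right hs0).mpr h4) hm₁0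
    calc l (s/u) ≤ Cl * ((s/u)^m₁)⁻¹ := h1
      _ = Cl * (u/s)^m₁ := by rw [h2]
      _ ≤ Cl * (2*R/s)^m₁ := mul_le_mul_of_nonneg_left h3 hCl0.le
  have hptup : ∀ u ∈ Set.Ioo s r, l (s/u) * l (s/u) * φf (u/r) * u⁻¹ ≤ Dc := by
    intro u hu
    have hu0 : 0 < u := hs0.trans hu.1
    have hsu0 : 0 < s/u := div_pos hs0 hu0
    have hur0 : 0 < u/r := div_pos hu0 hr0
    have hu_b : u⁻¹ ≤ s⁻¹ := inv_anti₀ hs0 hu.1.le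
    have hlnn : 0 ≤ l (s/u) := (hlpos _ hsu0).le
    have hφnn : 0 ≤ φf (u/r) := (hφpos _ hur0).le
    calc l (s/u) * l (s/u) * φf (u/r) * u⁻¹
        ≤ (Cl * (2*R/s)^m₁) * (Cl * (2*R/s)^m₁) * (Cφ * (2*R/s)) * s⁻¹ := by
          apply mul_le_mul _ hu_b (inv_nonneg.mpr hu0.le) (by positivity)
          apply mul_le_mul _ (hφbL u hu) hφnn (by positivity)
          exact mul_le_mul (hlbL u hu) (hlbL u hu) hlnn (le_trans hlnn (hlbL u hu))
      _ = Dc := by rw [hDcdef]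
  have hptlow : ∀ u ∈ Set.Ioo s r,
      c₀*c₀*(φf (u/r) * u⁻¹) ≤ l (s/u) * l (s/u) * φf (u/r) * u⁻¹ := by
    intro u hu
    have hu0 : 0 < u := hs0.trans hu.1
    have hsu0 : 0 < s/u := div_pos hs0 hu0
    have hsu1 : s/u ≤ 1 := le_of_lt ((div_lt_one hu0).mpr hu.1)
    have hcu : c₀ ≤ l (s/u) := hc₀ _ hsu0 hsu1
    have h5 : c₀ * c₀ ≤ l (s/u) * l (s/u) := mul_le_mul hcu hcu hc₀pos.le (hc₀pos.le.trans hcu)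
    have h6 : 0 ≤ φf (u/r) * u⁻¹ :=
      mul_nonneg (hφpos _ (div_pos hu0 hr0)).le (inv_nonneg.mpr hu0.le)
    calc c₀*c₀*(φf (u/r) * u⁻¹) ≤ (l (s/u) * l (s/u)) * (φf (u/r) * u⁻¹) :=
          mul_le_mul_of_nonneg_right h5 h6
      _ = l (s/u) * l (s/u) * φf (u/r) * u⁻¹ := by ring
  -- integrability
  have hintfull : IntegrableOn (fun u => l (s/u) * l (s/u) * φf (u/r) * u⁻¹) (Set.Ioo s r) := by
    apply Measure.integrableOn_of_bounded (M := Dc) measure_Ioo_lt_top.ne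
      hmeasfull.aestronglyMeasurable
    rw [ae_restrict_iff' measurableSet_Ioo]
    apply ae_of_all
    intro u hu
    have hu0 : 0 < u := hs0.trans hu.1
    have hp1 := hlpos (s/u) (div_pos hs0 hu0)
    have hp2 := hφpos (u/r) (div_pos hu0 hr0)
    have hnn : 0 ≤ l (s/u) * l (s/u) * φf (u/r) * u⁻¹ := by positivity
    rw [Real.norm_eq_abs, abs_of_nonneg hnn]
    exact hptup u hu
  have hintlow : IntegrableOn (fun u => φf (u/r) * u⁻¹) (Set.Ioo s r) := by
    apply Measure.integrableOn_of_bounded (M := Cφ * (2*R/s) * s⁻¹) measure_Ioo_lt_top.ne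
      hmeaslow.aestronglyMeasurable
    rw [ae_restrict_iff' measurableSet_Ioo]
    apply ae_of_all
    intro u hu
    have hu0 : 0 < u := hs0.trans hu.1
    have hp2 := hφpos (u/r) (div_pos hu0 hr0)
    have hnn : 0 ≤ φf (u/r) * u⁻¹ := by positivity
    rw [Real.norm_eq_abs, abs_of_nonneg hnn]
    have hu_b : u⁻¹ ≤ s⁻¹ := inv_anti₀ hs0 hu.1.le
    calc φf (u/r) * u⁻¹ ≤ (Cφ * (2*R/s)) * s⁻¹ :=
          mul_le_mul (hφbL u hu) hu_b (inv_nonneg.mpr hu0.le) (by positivity)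
      _ = Cφ * (2*R/s) * s⁻¹ := by ring
  -- lower bound on the integral
  have hcov := cov φf hs0 hsr
  have hnumlb : c₀*c₀ * Fn φf (s/r)
      ≤ ∫ u in Set.Ioo s r, l (s/u) * l (s/u) * φf (u/r) * u⁻¹ := by
    calc c₀*c₀ * Fn φf (s/r) = ∫ u in Set.Ioo s r, c₀*c₀ * (φf (u/r) * u⁻¹) := by
          rw [integral_const_mul, hcov]
      _ ≤ ∫ u in Set.Ioo s r, l (s/u) * l (s/u) * φf (u/r) * u⁻¹ :=
          setIntegral_mono_on (hintlow.const_mul _) hintfull measurableSet_Ioo hptlow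
  -- transfer of the growth bound to s/r
  have hsplit2 := Fn_split φf Cφ hCφ0 hφmeas hφpos hφup (a := a₀) (b := 2*a₀)
    ha₀pos (by linarith) h2a₀
  have hIub : (∫ v in Set.Ioo a₀ (2*a₀), φf v * v⁻¹) ≤ 2*Cφ*φf a₀ := by
    have hptc : ∀ v ∈ Set.Ioo a₀ (2*a₀), φf v * v⁻¹ ≤ (2*Cφ*φf a₀) * a₀⁻¹ := by
      intro v hv
      have hv0 : 0 < v := ha₀pos.trans hv.1
      have h1 : φf v ≤ 2*Cφ*φf a₀ :=
        hφfac v a₀ hv0 ha₀pos (by linarith [hv.2]) (by linarith) hv.2.le (by linarith [hv.1])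
      have h2 : v⁻¹ ≤ a₀⁻¹ := inv_anti₀ ha₀pos hv.1.le
      exact mul_le_mul h1 h2 (inv_nonneg.mpr hv0.le)
        (mul_nonneg (by positivity : (0:ℝ) ≤ 2*Cφ) (hφpos a₀ ha₀pos).le)
    have hintc : IntegrableOn (fun v => φf v * v⁻¹) (Set.Ioo a₀ (2*a₀)) :=
      gIntIoo φf Cφ hCφ0 hφmeas hφpos hφup ha₀pos h2a₀
    have h3 := setIntegral_mono_on hintc
      (integrableOn_const measure_Ioo_lt_top.ne) measurableSet_Ioo hptc
    rw [setIntegral_const, Real.volume_real_Ioo, max_eq_left (by linarith),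
      smul_eq_mul] at h3
    calc (∫ v in Set.Ioo a₀ (2*a₀), φf v * v⁻¹) ≤ (2*a₀ - a₀) * ((2*Cφ*φf a₀) * a₀⁻¹) := h3
      _ = 2*Cφ*φf a₀ := by field_simp; ring
  have hFa' : M'' * φf (s/r) ≤ Fn φf (s/r) := by
    have hmono := Fn_mono φf Cφ hCφ0 hφmeas hφpos hφup ha'0 ha'ub.le h2a₀
    have hφc : φf (s/r) ≤ 2*Cφ*φf a₀ :=
      hφfac (s/r) a₀ ha'0 ha₀pos ha'le1 (by linarith) (by linarith [ha'ub]) (by linarith [ha'lb])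
    have h3 : M'' * φf (s/r) ≤ M'' * (2*Cφ*φf a₀) := mul_le_mul_of_nonneg_left hφc hM''0
    have h4 : M'' * (2*Cφ*φf a₀) = K * φf a₀ - 2*Cφ*φf a₀ := by rw [hK]; ring
    linarith [hmono, hIub, hgrow, hsplit2]
  have hFn0 : 0 ≤ Fn φf (s/r) := le_trans (by positivity) hFa'
  constructor
  · rw [le_div_iff₀ hφa'pos]
    have h5 : c₀*c₀*M'' = max M 0 := by rw [hM'']; field_simp
    have h6 : M * φf (s/r) ≤ max M 0 * φf (s/r) :=
      mul_le_mul_of_nonneg_right (le_max_left M 0) hφa'pos.le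
    have h7 := mul_le_mul_of_nonneg_left hFa' (by positivity : (0:ℝ) ≤ c₀*c₀)
    calc M * φf (s/r) ≤ max M 0 * φf (s/r) := h6
      _ = c₀*c₀*(M'' * φf (s/r)) := by rw [← mul_assoc, h5]
      _ ≤ c₀*c₀ * Fn φf (s/r) := h7
      _ ≤ _ := hnumlb
  · have hnumub : (∫ u in Set.Ioo s r, l (s/u) * l (s/u) * φf (u/r) * u⁻¹) ≤ Dc * (2*R) := by
      have h3 := setIntegral_mono_on hintfull
        (integrableOn_const measure_Ioo_lt_top.ne) measurableSet_Ioo hptup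
      rw [setIntegral_const, Real.volume_real_Ioo, max_eq_left (by linarith),
        smul_eq_mul] at h3
      calc (∫ u in Set.Ioo s r, l (s/u) * l (s/u) * φf (u/r) * u⁻¹)
          ≤ (r - s) * Dc := h3
        _ ≤ (2*R) * Dc := mul_le_mul_of_nonneg_right (by linarith) hDc0
        _ = Dc * (2*R) := mul_comm _ _
    have hden : Cφ⁻¹ * (a₀/2) ≤ φf (s/r) := by
      have h1 := hφlow (s/r) ha'0 ha'le1
      have h2 : Cφ⁻¹*(a₀/2) ≤ Cφ⁻¹*(s/r) :=
        mul_le_mul_of_nonneg_left (by linarith [ha'lb]) (inv_pos.mpr hCφ0).le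
      linarith
    have hnum0 : 0 ≤ ∫ u in Set.Ioo s r, l (s/u) * l (s/u) * φf (u/r) * u⁻¹ :=
      le_trans (by positivity) hnumlb
    exact div_le_div₀ (by positivity) hnumub (by positivity) hden

end Stm9

/-- Lemma 3.5(ii): borderline case `β₂ = α + β₁` with
`Φ₁(r) = (1∧r)^{β₁}`, `Φ₂(r) = (1∧r)^{β₂} φ(r)` and `liminf_{s→0⁺} ℓ(s) > 0`. -/
theorem statement_9
    (d : ℕ) (hd : 2 ≤ d)
    (D : Set (EuclideanSpace ℝ (Fin d))) (hDopen : IsOpen D)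
    (hDbdd : Bornology.IsBounded D)
    (α β₁ : ℝ) (hα0 : 0 < α) (hα2 : α < 2) (hβ₁ : 0 ≤ β₁)
    (φf : ℝ → ℝ) (hφ : StdFun φf) (hφscale : SlowlyVaryingScaling φf)
    (Φ₁ Φ₂ l : ℝ → ℝ)
    (hΦ₁def : ∀ r : ℝ, Φ₁ r = min 1 r ^ β₁)
    (hΦ₂def : ∀ r : ℝ, Φ₂ r = min 1 r ^ (α + β₁) * φf r)
    (hl : StdFun l) (hlscale : EllScaling l β₁ (α + β₁))
    (hlliminf : ∃ c : ℝ, 0 < c ∧ ∀ᶠ s in 𝓝[>] (0 : ℝ), c ≤ l s)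
    (Φ₀ : ℝ → ℝ) (hΦ₀def : ∀ r : ℝ, Φ₀ r = Φ₁ r * l r) :
    (∀ x ∈ D, ∀ y ∈ D, x ≠ y →
      Tendsto (fun t : ℝ =>
          t * dist x y ^ (-α) * sI α D Φ₀ φf l t x y / Afun α D Φ₁ Φ₂ l t x y)
        (𝓝[>] (0 : ℝ)) (𝓝 0)) ∧
    (∀ Qb ∈ frontier D, ∀ Qb' ∈ frontier D, Qb ≠ Qb' →
      ∀ M : ℝ, ∃ᶠ t in 𝓝[>] (0 : ℝ),
        M ≤ Filter.liminf
            (fun p : EuclideanSpace ℝ (Fin d) × EuclideanSpace ℝ (Fin d) =>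
              t * dist p.1 p.2 ^ (-α) * sI α D Φ₀ φf l t p.1 p.2 /
                Afun α D Φ₁ Φ₂ l t p.1 p.2)
            ((𝓝[D] Qb) ×ˢ (𝓝[D] Qb'))) := by
  constructor
  · -- Part (a)
    intro x hx y hy hxy
    have hfr : (frontier D).Nonempty := by
      rcases Set.eq_empty_or_nonempty (frontier D) with h | h
      · exfalso
        have hnt : Nonempty (Fin d) := ⟨⟨0, by omega⟩⟩
        rcases frontier_eq_empty_iff.mp h with h1 | h1
        · rw [h1] at hx; exact hx
        · rw [h1, Bornology.isBounded_univ] at hDbdd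
          exact NormedSpace.unbounded_univ ℝ (EuclideanSpace ℝ (Fin d))
            (Bornology.isBounded_univ.mpr hDbdd)
      · exact h
    have hnotmem : ∀ z ∈ D, z ∉ frontier D := by
      intro z hz hzf
      rw [hDopen.frontier_eq] at hzf
      exact hzf.2 hz
    have hδx : 0 < dd D x :=
      (IsClosed.notMem_iff_infDist_pos isClosed_frontier hfr).mp (hnotmem x hx)
    have hδy : 0 < dd D y :=
      (IsClosed.notMem_iff_infDist_pos isClosed_frontier hfr).mp (hnotmem y hy)
    set m := min (dd D x) (dd D y) with hmdef
    have hm : 0 < m := lt_min hδx hδy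
    set t₁ := (m/2) ^ α with ht₁def
    have hroot : ∀ t' : ℝ, 0 < t' → t' < m ^ α → t' ^ (1/α) ≤ m := by
      intro t' h0 h1
      have h2 := Real.rpow_lt_rpow h0.le h1 (by positivity : (0:ℝ) < 1/α)
      rw [one_div, ← Real.rpow_mul hm.le, mul_inv_cancel₀ hα0.ne', Real.rpow_one] at h2
      rw [one_div]
      exact h2.le
    have ht₁root : t₁ ^ (1/α) ≤ m := by
      rw [ht₁def, one_div, ← Real.rpow_mul (by positivity : (0:ℝ) ≤ m/2),
        mul_inv_cancel₀ hα0.ne', Real.rpow_one]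
      linarith
    have keyeq : ∀ t' : ℝ, t' ^ (1/α) ≤ m →
        sI α D Φ₀ φf l t' x y = sI α D Φ₀ φf l t₁ x y ∧
        Afun α D Φ₁ Φ₂ l t' x y = Afun α D Φ₁ Φ₂ l t₁ x y := by
      intro t' h
      have e1 : max (min (dd D x) (dd D y)) (t' ^ (1/α)) = min (dd D x) (dd D y) :=
        max_eq_left h
      have e2 : max (max (dd D x) (dd D y)) (t' ^ (1/α)) = max (dd D x) (dd D y) :=
        max_eq_left (h.trans ((min_le_left _ _).trans (le_max_left _ _)))
      have e3 : max (dd D x) (t' ^ (1/α)) = dd D x := max_eq_left (h.trans (min_le_left _ _))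
      have e4 : max (dd D y) (t' ^ (1/α)) = dd D y := max_eq_left (h.trans (min_le_right _ _))
      have f1 : max (min (dd D x) (dd D y)) (t₁ ^ (1/α)) = min (dd D x) (dd D y) :=
        max_eq_left ht₁root
      have f2 : max (max (dd D x) (dd D y)) (t₁ ^ (1/α)) = max (dd D x) (dd D y) :=
        max_eq_left (ht₁root.trans ((min_le_left _ _).trans (le_max_left _ _)))
      have f3 : max (dd D x) (t₁ ^ (1/α)) = dd D x :=
        max_eq_left (ht₁root.trans (min_le_left _ _))
      have f4 : max (dd D y) (t₁ ^ (1/α)) = dd D y :=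
        max_eq_left (ht₁root.trans (min_le_right _ _))
      constructor <;> simp only [sI, Afun, e1, e2, e3, e4, f1, f2, f3, f4]
    set c := dist x y ^ (-α) * sI α D Φ₀ φf l t₁ x y / Afun α D Φ₁ Φ₂ l t₁ x y with hcdef
    have hev : ∀ᶠ t in 𝓝[>] (0:ℝ), t * c =
        t * dist x y ^ (-α) * sI α D Φ₀ φf l t x y / Afun α D Φ₁ Φ₂ l t x y := by
      filter_upwards [Ioo_mem_nhdsGT (Real.rpow_pos_of_pos hm α)] with t ht
      obtain ⟨he1, he2⟩ := keyeq t (hroot t ht.1 ht.2)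
      rw [he1, he2, hcdef]
      ring
    have hbase : Tendsto (fun t : ℝ => t * c) (𝓝[>] (0:ℝ)) (𝓝 0) := by
      have h1 : Tendsto (fun t : ℝ => t * c) (𝓝 0) (𝓝 0) := by
        have h2 : Continuous fun t : ℝ => t * c := continuous_id.mul continuous_const
        have h3 := h2.tendsto 0
        simpa using h3
      exact h1.mono_left nhdsWithin_le_nhds
    exact Filter.Tendsto.congr' hev hbase
  · -- Part (b)
    intro Qb hQb Qb' hQb' hQne M
    obtain ⟨hφmeas, hφpos, hφone⟩ := hφ
    obtain ⟨hlmeas, hlpos, hlone⟩ := hl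
    have hφ1 : φf 1 = 1 := hφone 1 le_rfl
    have hl1 : l 1 = 1 := hlone 1 le_rfl
    obtain ⟨Cφ, hCφ1, hCφsc⟩ := hφscale 1 one_pos
    have hCφ0 : 0 < Cφ := lt_of_lt_of_le one_pos hCφ1
    have hφup : ∀ v : ℝ, 0 < v → v ≤ 1 → φf v ≤ Cφ * v⁻¹ := by
      intro v hv hv1
      have h := (hCφsc v 1 hv hv1 le_rfl).1
      rw [hφ1] at h
      have h2 : ((1:ℝ)/v) ^ (-(1:ℝ)) = v := by rw [Real.rpow_neg_one, one_div, inv_inv]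
      rw [h2] at h
      exact Stm9.inv_bound hCφ0 hv (hφpos v hv) h
    have hφlow : ∀ v : ℝ, 0 < v → v ≤ 1 → Cφ⁻¹ * v ≤ φf v := by
      intro v hv hv1
      have h := (hCφsc v 1 hv hv1 le_rfl).2
      rw [hφ1, Real.rpow_one] at h
      have h3 := Stm9.inv_bound' hCφ0 (show (0:ℝ) < 1/v by positivity) (hφpos v hv) h
      rwa [one_div, inv_inv] at h3
    have hφfac : ∀ w w' : ℝ, 0 < w → 0 < w' → w ≤ 1 → w' ≤ 1 → w ≤ 2*w' → w' ≤ 2*w →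
        φf w ≤ 2*Cφ*φf w' := by
      intro w w' hw hw' hw1 hw1' h12 h21
      rcases le_total w w' with hle | hle
      · have h := (hCφsc w w' hw hle hw1').1
        rw [Real.rpow_neg_one] at h
        have h' : Cφ⁻¹ * (w/w') ≤ φf w' / φf w := by rwa [inv_div] at h
        have hφw := hφpos w hw
        have hφw' := hφpos w' hw'
        rw [le_div_iff₀ hφw] at h'
        have h'' : w * φf w ≤ Cφ * (w' * φf w') := by
          have h5 := mul_le_mul_of_nonneg_left h' (mul_pos hCφ0 hw').le
          calc w * φf w = (Cφ * w') * (Cφ⁻¹ * (w/w') * φf w) := by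
                field_simp
            _ ≤ (Cφ * w') * φf w' := h5
            _ = Cφ * (w' * φf w') := by ring
        have h3 : Cφ * (w' * φf w') ≤ Cφ * ((2*w) * φf w') :=
          mul_le_mul_of_nonneg_left (mul_le_mul_of_nonneg_right h21 hφw'.le) hCφ0.le
        have h4 : w * φf w ≤ w * (2*Cφ*φf w') := by
          calc w * φf w ≤ Cφ*((2*w)*φf w') := h''.trans h3
            _ = w * (2*Cφ*φf w') := by ring
        exact le_of_mul_le_mul_left h4 hw
      · have h := (hCφsc w' w hw' hle hw1).2
        rw [Real.rpow_one] at h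
        have hφw' := hφpos w' hw'
        rw [div_le_iff₀ hφw'] at h
        have h2 : (w/w') ≤ 2 := by rw [div_le_iff₀ hw']; linarith
        calc φf w ≤ Cφ * (w/w') * φf w' := h
          _ ≤ Cφ * 2 * φf w' :=
              mul_le_mul_of_nonneg_right (mul_le_mul_of_nonneg_left h2 hCφ0.le) hφw'.le
          _ = 2*Cφ*φf w' := by ring
    have hφεbd : ∀ ε : ℝ, 0 < ε → ∃ C : ℝ, 1 ≤ C ∧ ∀ v : ℝ, 0 < v → v ≤ 1 →
        φf v ≤ C * v ^ (-ε) := by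
      intro ε hε
      obtain ⟨C, hC1, hCsc⟩ := hφscale ε hε
      refine ⟨C, hC1, fun v hv hv1 => ?_⟩
      have h := (hCsc v 1 hv hv1 le_rfl).1
      rw [hφ1] at h
      have h2 : ((1:ℝ)/v) ^ (-ε) = v ^ ε := by
        rw [one_div, Real.inv_rpow hv.le, Real.rpow_neg hv.le, inv_inv]
      rw [h2] at h
      have h3 := Stm9.inv_bound (lt_of_lt_of_le one_pos hC1)
        (Real.rpow_pos_of_pos hv ε) (hφpos v hv) h
      rwa [← Real.rpow_neg hv.le] at h3
    obtain ⟨Cl, hCl1, hClsc⟩ := hlscale 1 one_pos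
    have hCl0 : 0 < Cl := lt_of_lt_of_le one_pos hCl1
    set m₁ := min (1:ℝ) β₁ with hm₁def
    set m₂ := min (1:ℝ) (α+β₁) with hm₂def
    have hm₁0 : 0 ≤ m₁ := le_min zero_le_one hβ₁
    have hm₂0 : 0 ≤ m₂ := le_min zero_le_one (by linarith)
    have hlup : ∀ w : ℝ, 0 < w → w ≤ 1 → l w ≤ Cl * (w ^ m₁)⁻¹ := by
      intro w hw hw1
      have h := (hClsc w 1 hw hw1 le_rfl).1
      rw [hl1] at h
      have h2 : ((1:ℝ)/w) ^ (-m₁) = w ^ m₁ := by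
        rw [one_div, Real.inv_rpow hw.le, Real.rpow_neg hw.le, inv_inv]
      rw [h2] at h
      exact Stm9.inv_bound hCl0 (Real.rpow_pos_of_pos hw m₁) (hlpos w hw) h
    have hllow : ∀ w : ℝ, 0 < w → w ≤ 1 → Cl⁻¹ * w ^ m₂ ≤ l w := by
      intro w hw hw1
      have h := (hClsc w 1 hw hw1 le_rfl).2
      rw [hl1] at h
      have h2 : ((1:ℝ)/w) ^ m₂ = (w ^ m₂)⁻¹ := by rw [one_div, Real.inv_rpow hw.le]
      rw [h2] at h
      have h3 := Stm9.inv_bound' hCl0 (inv_pos.mpr (Real.rpow_pos_of_pos hw m₂))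
        (hlpos w hw) h
      rwa [inv_inv] at h3
    obtain ⟨cc, hccpos, hccev⟩ := hlliminf
    obtain ⟨η, hη, hηsub⟩ :=
      mem_nhdsGT_iff_exists_Ioo_subset.mp (Filter.eventually_iff.mp hccev)
    set η' := min η 1 with hη'def
    have hη'0 : 0 < η' := lt_min hη one_pos
    set c₀ := min cc (Cl⁻¹ * η' ^ m₂) with hc₀def
    have hc₀pos : 0 < c₀ := lt_min hccpos (by positivity)
    have hc₀ : ∀ w : ℝ, 0 < w → w ≤ 1 → c₀ ≤ l w := by
      intro w hw hw1
      rcases lt_or_ge w η' with hlt | hge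
      · exact (min_le_left _ _).trans (hηsub ⟨hw, hlt.trans_le (min_le_left _ _)⟩)
      · have h := hllow w hw hw1
        have h2 : Cl⁻¹ * η' ^ m₂ ≤ Cl⁻¹ * w ^ m₂ :=
          mul_le_mul_of_nonneg_left (Real.rpow_le_rpow hη'0.le hge hm₂0)
            (inv_pos.mpr hCl0).le
        exact (min_le_right _ _).trans (h2.trans h)
    set R := dist Qb Qb' with hRdef
    have hR0 : 0 < R := dist_pos.mpr hQne
    set M'' := max M 0 / (c₀ * c₀) with hM''def
    have hM''0 : 0 ≤ M'' := div_nonneg (le_max_right M 0) (by positivity)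
    set K := 2*Cφ*(M''+1) with hKdef
    have hK0 : 0 < K := by positivity
    haveI hnb1 : (𝓝[D] Qb).NeBot :=
      mem_closure_iff_nhdsWithin_neBot.mp (frontier_subset_closure hQb)
    haveI hnb2 : (𝓝[D] Qb').NeBot :=
      mem_closure_iff_nhdsWithin_neBot.mp (frontier_subset_closure hQb')
    haveI hnbF : ((𝓝[D] Qb) ×ˢ (𝓝[D] Qb')).NeBot := Filter.prod_neBot.mpr ⟨hnb1, hnb2⟩
    rw [Filter.frequently_iff]
    intro U hU
    obtain ⟨ε', hε', hsubU⟩ := mem_nhdsGT_iff_exists_Ioo_subset.mp hU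
    have hε'0 : 0 < ε' := hε'
    set amax := min (1/8 : ℝ) (ε' ^ (1/α) / (2*R)) with hamaxdef
    have hamax0 : 0 < amax := lt_min (by norm_num) (by positivity)
    have hamax1 : amax ≤ 1/2 := (min_le_left _ _).trans (by norm_num)
    obtain ⟨a₀, ha₀pos, ha₀le, hgrow⟩ := Stm9.growth φf Cφ hCφ1 hφmeas hφpos hφup hφlow
      hφfac hφεbd K hK0 amax hamax0 hamax1
    have ha₀8 : a₀ ≤ 1/8 := ha₀le.trans (min_le_left _ _)
    have ha₀ε : a₀ ≤ ε' ^ (1/α) / (2*R) := ha₀le.trans (min_le_right _ _)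
    set s := a₀ * R with hsdef
    have hs0 : 0 < s := mul_pos ha₀pos hR0
    set t := s ^ α with htdef
    have ht0 : 0 < t := Real.rpow_pos_of_pos hs0 α
    have htroot : t ^ (1/α) = s := by
      rw [htdef, one_div, ← Real.rpow_mul hs0.le, mul_inv_cancel₀ hα0.ne', Real.rpow_one]
    have htU : t ∈ U := by
      apply hsubU
      refine ⟨ht0, ?_⟩
      have h4 : 0 < ε' ^ (1/α) := Real.rpow_pos_of_pos hε'0 _
      have h1 : s < ε' ^ (1/α) := by
        have h2 : a₀ * R ≤ (ε' ^ (1/α) / (2*R)) * R := mul_le_mul_of_nonneg_right ha₀ε hR0.le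
        have h3 : (ε' ^ (1/α) / (2*R)) * R = ε' ^ (1/α) / 2 := by field_simp
        rw [h3] at h2
        rw [hsdef]
        linarith
      calc t = s ^ α := htdef
        _ < (ε' ^ (1/α)) ^ α := Real.rpow_lt_rpow hs0.le h1 hα0
        _ = ε' := by
            rw [one_div, ← Real.rpow_mul hε'0.le, inv_mul_cancel₀ hα0.ne', Real.rpow_one]
    refine ⟨t, htU, ?_⟩
    set B := ((Cl * (2*R/s) ^ m₁) * (Cl * (2*R/s) ^ m₁) * (Cφ * (2*R/s)) * s⁻¹) * (2*R)
        / (Cφ⁻¹ * (a₀/2)) with hBdef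
    have key : ∀ x y : EuclideanSpace ℝ (Fin d), dd D x < s → dd D y < s →
        R/2 < dist x y → dist x y < 2*R →
        M ≤ t * dist x y ^ (-α) * sI α D Φ₀ φf l t x y / Afun α D Φ₁ Φ₂ l t x y ∧
        t * dist x y ^ (-α) * sI α D Φ₀ φf l t x y / Afun α D Φ₁ Φ₂ l t x y ≤ B := by
      intro x y hdx hdy hr1 hr2
      have hr0 : 0 < dist x y := lt_trans (by linarith) hr1
      have hs4 : s ≤ dist x y / 4 := by
        have h1 : s ≤ R/8 := by
          rw [hsdef]
          calc a₀ * R ≤ (1/8) * R := mul_le_mul_of_nonneg_right ha₀8 hR0.le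
            _ = R/8 := by ring
        linarith
      have hsr : s < dist x y := by linarith
      have ha'0 : 0 < s / dist x y := div_pos hs0 hr0
      have ha'1 : s / dist x y < 1 := (div_lt_one hr0).mpr hsr
      have hφa'pos : 0 < φf (s / dist x y) := hφpos _ ha'0
      have hlr : 0 < l (s / dist x y) := hlpos _ ha'0
      have e1 : max (min (dd D x) (dd D y)) (t ^ (1/α)) = s := by
        rw [htroot]; exact max_eq_right ((min_le_left _ _).trans hdx.le)
      have e2 : max (max (dd D x) (dd D y)) (t ^ (1/α)) = s := by
        rw [htroot]; exact max_eq_right (max_le hdx.le hdy.le)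
      have e3 : max (dd D x) (t ^ (1/α)) = s := by rw [htroot]; exact max_eq_right hdx.le
      have e4 : max (dd D y) (t ^ (1/α)) = s := by rw [htroot]; exact max_eq_right hdy.le
      have e5 : min s (dist x y / 4) = s := min_eq_left hs4
      have e6 : min s (dist x y) = s := min_eq_left hsr.le
      have e7 : s / s = 1 := div_self hs0.ne'
      have hmin1 : min 1 (s / dist x y) = s / dist x y := min_eq_right ha'1.le
      have hIeq : (∫ u in Set.Ioo s (dist x y),
          l (s/u) * l (s/u) * φf (u / dist x y)
            / (l (s / dist x y) * l (s / dist x y)) / u)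
          = (l (s / dist x y) * l (s / dist x y))⁻¹
              * ∫ u in Set.Ioo s (dist x y),
                  l (s/u) * l (s/u) * φf (u / dist x y) * u⁻¹ := by
        rw [← integral_const_mul]
        exact setIntegral_congr_fun measurableSet_Ioo (fun u _ => by ring)
      have hsIeq : sI α D Φ₀ φf l t x y
          = ((s / dist x y) ^ β₁ * l (s / dist x y))
            * ((s / dist x y) ^ β₁ * l (s / dist x y))
            * ((l (s / dist x y) * l (s / dist x y))⁻¹
              * ∫ u in Set.Ioo s (dist x y),
                  l (s/u) * l (s/u) * φf (u / dist x y) * u⁻¹) := by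
        simp only [sI, Afun, e1, e2, e3, e4, e5, hΦ₀def, hΦ₁def, hmin1]
        rw [hIeq]
        ring
      have hAeq : Afun α D Φ₁ Φ₂ l t x y
          = (s / dist x y) ^ β₁ * ((s / dist x y) ^ (α+β₁) * φf (s / dist x y)) := by
        simp only [Afun, e1, e2, e6, e7, hl1, hΦ₁def, hΦ₂def, hmin1]
        ring
      have hbab : (s / dist x y) ^ (α+β₁)
          = (s / dist x y) ^ α * (s / dist x y) ^ β₁ := Real.rpow_add ha'0 α β₁
      have hX : t * dist x y ^ (-α) = (s / dist x y) ^ α := by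
        rw [htdef, Real.div_rpow hs0.le hr0.le, Real.rpow_neg hr0.le, div_eq_mul_inv]
      have hb1 : (0:ℝ) < (s / dist x y) ^ β₁ := Real.rpow_pos_of_pos ha'0 _
      have hba : (0:ℝ) < (s / dist x y) ^ α := Real.rpow_pos_of_pos ha'0 _
      have heq : t * dist x y ^ (-α) * sI α D Φ₀ φf l t x y / Afun α D Φ₁ Φ₂ l t x y
          = (∫ u in Set.Ioo s (dist x y),
              l (s/u) * l (s/u) * φf (u / dist x y) * u⁻¹) / φf (s / dist x y) := by
        rw [hsIeq, hAeq, hbab, hX]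
        field_simp
      have hbounds := Stm9.Jbounds φf l Cφ Cl c₀ m₁ hφmeas hφpos hlmeas hlpos hCφ1 hφup
        hφlow hφfac hCl0 hm₁0 hlup hc₀pos hc₀ M M'' K R a₀ s (dist x y) hM''def hKdef hR0
        ha₀pos ha₀8 hgrow hsdef hr1 hr2
      rw [heq, hBdef]
      exact hbounds
    have hevx : ∀ᶠ x in 𝓝[D] Qb, dd D x < s := by
      have h0 : Tendsto (dd D) (𝓝[D] Qb) (𝓝 0) := by
        have hcont : Continuous (dd D) := Metric.continuous_infDist_pt _
        have h1 := hcont.tendsto Qb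
        rw [show dd D Qb = 0 from Metric.infDist_zero_of_mem hQb] at h1
        exact h1.mono_left nhdsWithin_le_nhds
      exact Filter.Tendsto.eventually_lt_const hs0 h0
    have hevy : ∀ᶠ y in 𝓝[D] Qb', dd D y < s := by
      have h0 : Tendsto (dd D) (𝓝[D] Qb') (𝓝 0) := by
        have hcont : Continuous (dd D) := Metric.continuous_infDist_pt _
        have h1 := hcont.tendsto Qb'
        rw [show dd D Qb' = 0 from Metric.infDist_zero_of_mem hQb'] at h1
        exact h1.mono_left nhdsWithin_le_nhds
      exact Filter.Tendsto.eventually_lt_const hs0 h0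
    have hevd : ∀ᶠ p : EuclideanSpace ℝ (Fin d) × EuclideanSpace ℝ (Fin d) in
        (𝓝[D] Qb) ×ˢ (𝓝[D] Qb'), R/2 < dist p.1 p.2 ∧ dist p.1 p.2 < 2*R := by
      have hco : Tendsto (fun p : EuclideanSpace ℝ (Fin d) × EuclideanSpace ℝ (Fin d) =>
          dist p.1 p.2) ((𝓝[D] Qb) ×ˢ (𝓝[D] Qb')) (𝓝 R) := by
        have h1 : Tendsto (fun p : EuclideanSpace ℝ (Fin d) × EuclideanSpace ℝ (Fin d) =>
            dist p.1 p.2) (𝓝 (Qb, Qb')) (𝓝 (dist Qb Qb')) :=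
          (continuous_fst.dist continuous_snd).tendsto _
        rw [nhds_prod_eq] at h1
        exact h1.mono_left (Filter.prod_mono nhdsWithin_le_nhds nhdsWithin_le_nhds)
      have h2 := hco.eventually (Ioo_mem_nhds (show R/2 < R by linarith) (show R < 2*R by linarith))
      exact h2.mono (fun p hp => ⟨hp.1, hp.2⟩)
    have hev : ∀ᶠ p : EuclideanSpace ℝ (Fin d) × EuclideanSpace ℝ (Fin d) in
        (𝓝[D] Qb) ×ˢ (𝓝[D] Qb'),
        M ≤ t * dist p.1 p.2 ^ (-α) * sI α D Φ₀ φf l t p.1 p.2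
            / Afun α D Φ₁ Φ₂ l t p.1 p.2 ∧
        t * dist p.1 p.2 ^ (-α) * sI α D Φ₀ φf l t p.1 p.2
            / Afun α D Φ₁ Φ₂ l t p.1 p.2 ≤ B := by
      filter_upwards [hevx.prod_inl (𝓝[D] Qb'), hevy.prod_inr (𝓝[D] Qb), hevd]
        with p h1 h2 h3
      exact key p.1 p.2 h1 h2 h3.1 h3.2
    rw [Filter.liminf_eq]
    apply le_csSup
    · refine ⟨B, fun b hb => ?_⟩
      simp only [Set.mem_setOf_eq] at hb
      obtain ⟨p, hbp, hpB⟩ := (hb.and (hev.mono fun p h => h.2)).exists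
      exact hbp.trans hpB
    · exact hev.mono fun p h => h.1
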